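/- For all words u, v ∈ L*: Δ̄₀(u ⧢₀ v) − Δ̄₀(u) ⧢₀ Δ̄₀(v) ∈ L_- ⊗ ℚ⟨L⟩ + ℚ⟨L⟩ ⊗ L_-. -/

import Mathlib

open scoped TensorProduct

/-- The two-letter alphabet `L = {d, y}`. -/
inductive Letter : Type
  | d : Letter
  | y : Letter
deriving DecidableEq

/-- `ℚ⟨L⟩`, the ℚ-vector space with basis the words on `L`; with the concatenation
product it is the free noncommutative ℚ-algebra on `L`. -/
abbrev V : Type := MonoidAlgebra ℚ (FreeMonoid Letter)

/-- The basis vector corresponding to a word. -/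
noncomputable def wrd (w : List Letter) : V :=
  MonoidAlgebra.single (FreeMonoid.ofList w) (1 : ℚ)

/-- The (a priori neither commutative nor associative) product `⧢₀` on basis words,
defined recursively by (P1) `e ⧢₀ w = w ⧢₀ e = w`;
(P2) `(yu) ⧢₀ v = u ⧢₀ (yv) = y(u ⧢₀ v)`;
(P3₀) `(du) ⧢₀ (dv) = d(u ⧢₀ (dv)) − u ⧢₀ (ddv)`. -/
noncomputable def shW0 : List Letter → List Letter → V
  | [], v => wrd v
  | u@(_ :: _), [] => wrd u
  | (Letter.y :: u), v => wrd [Letter.y] * shW0 u v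
  | (Letter.d :: u), (Letter.y :: v) => wrd [Letter.y] * shW0 (Letter.d :: u) v
  | (Letter.d :: u), (Letter.d :: v) =>
      wrd [Letter.d] * shW0 u (Letter.d :: v) - shW0 u (Letter.d :: Letter.d :: v)
termination_by u v => 2 * (u.length + v.length) + u.length

/-- The ℚ-bilinear extension of `⧢₀` to `ℚ⟨L⟩`. -/
noncomputable def shL0 : V →ₗ[ℚ] V →ₗ[ℚ] V :=
  (Finsupp.lsum ℚ fun u => LinearMap.toSpanSingleton ℚ (V →ₗ[ℚ] V)
    ((Finsupp.lsum ℚ fun v =>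
      LinearMap.toSpanSingleton ℚ V (shW0 (FreeMonoid.toList u) (FreeMonoid.toList v))) ∘ₗ
        (MonoidAlgebra.coeffLinearEquiv ℚ : V ≃ₗ[ℚ] _).toLinearMap)) ∘ₗ
    (MonoidAlgebra.coeffLinearEquiv ℚ : V ≃ₗ[ℚ] _).toLinearMap

/-- The values of `Δ̄₀` on letters: `Δ̄₀(y) = e⊗y + y⊗e`, `Δ̄₀(d) = e⊗d + d⊗e`. -/
noncomputable def dval0 : Letter → (V ⊗[ℚ] V)
  | Letter.y => 1 ⊗ₜ wrd [Letter.y] + wrd [Letter.y] ⊗ₜ 1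
  | Letter.d => 1 ⊗ₜ wrd [Letter.d] + wrd [Letter.d] ⊗ₜ 1

/-- `Δ̄₀ : ℚ⟨L⟩ → ℚ⟨L⟩ ⊗ ℚ⟨L⟩`, the unique morphism of unital ℚ-algebras
(concatenation product on the source, componentwise concatenation on the tensor square)
with the prescribed values on the letters. -/
noncomputable def Delta0 : V →ₐ[ℚ] (V ⊗[ℚ] V) :=
  MonoidAlgebra.lift ℚ (V ⊗[ℚ] V) (FreeMonoid Letter) (FreeMonoid.lift dval0)

/-- The componentwise extension of `⧢₀` to `ℚ⟨L⟩ ⊗ ℚ⟨L⟩`: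
`(a⊗b) ⧢₀ (c⊗d) = (a ⧢₀ c) ⊗ (b ⧢₀ d)`. -/
noncomputable def shT0 (x z : V ⊗[ℚ] V) : V ⊗[ℚ] V :=
  (TensorProduct.map (TensorProduct.lift shL0) (TensorProduct.lift shL0))
    ((TensorProduct.tensorTensorTensorComm ℚ V V V V) (x ⊗ₜ z))

/-- `L₋ ⊆ ℚ⟨L⟩`: the smallest ℚ-subspace containing all elements
`d^k(d(u ⧢₀ v) − (du) ⧢₀ v − u ⧢₀ (dv))` (`k ∈ ℕ₀`, `u, v` words) and closed under
left and right `⧢₀`-multiplication by arbitrary elements of `ℚ⟨L⟩`. -/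
noncomputable def Lminus : Submodule ℚ V :=
  sInf {p : Submodule ℚ V |
    {x : V | ∃ (k : ℕ) (u v : List Letter),
        x = wrd (List.replicate k Letter.d) *
          (wrd [Letter.d] * shL0 (wrd u) (wrd v)
            - shL0 (wrd (Letter.d :: u)) (wrd v)
            - shL0 (wrd u) (wrd (Letter.d :: v)))} ⊆ ↑p ∧
      ∀ x ∈ p, ∀ b : V, shL0 x b ∈ p ∧ shL0 b x ∈ p}

-- basic lemmas
lemma wrd_nil : wrd [] = 1 := rfl

lemma wrd_mul (a b : List Letter) : wrd a * wrd b = wrd (a ++ b) := by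
  simp [wrd, MonoidAlgebra.single_mul_single]

lemma shL0_wrd (u v : List Letter) : shL0 (wrd u) (wrd v) = shW0 u v := by
  simp [shL0, wrd, MonoidAlgebra.coeffLinearEquiv_apply, MonoidAlgebra.coeff_single]

-- extensionality: linear maps from V agree if they agree on wrd
lemma V_ext {W : Type*} [AddCommMonoid W] [Module ℚ W] {f g : V →ₗ[ℚ] W}
    (h : ∀ w : List Letter, f (wrd w) = g (wrd w)) : f = g := by
  refine MonoidAlgebra.lhom_ext' fun a => ?_
  ext1
  have : MonoidAlgebra.single a (1:ℚ) = wrd (FreeMonoid.toList a) := rfl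
  simp only [LinearMap.comp_apply, MonoidAlgebra.lsingle_apply, this]
  exact h _

-- word-level structural lemmas
lemma shW0_nil_left (v : List Letter) : shW0 [] v = wrd v := by simp [shW0]

lemma shW0_nil_right (u : List Letter) : shW0 u [] = wrd u := by
  cases u with
  | nil => simp [shW0]
  | cons a u => cases a <;> simp [shW0]

lemma shW0_y_left (u v : List Letter) :
    shW0 (Letter.y :: u) v = wrd [Letter.y] * shW0 u v := by
  cases v with
  | nil => rw [shW0_nil_right, shW0_nil_right, wrd_mul]; rfl
  | cons b v => simp [shW0]

lemma shW0_y_right (u v : List Letter) :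
    shW0 u (Letter.y :: v) = wrd [Letter.y] * shW0 u v := by
  induction u with
  | nil => rw [shW0_nil_left, shW0_nil_left, wrd_mul]; rfl
  | cons a u ih =>
    cases a with
    | y => rw [shW0_y_left, shW0_y_left, ih]
    | d => simp [shW0]

lemma shW0_d_d (u v : List Letter) :
    shW0 (Letter.d :: u) (Letter.d :: v)
      = wrd [Letter.d] * shW0 u (Letter.d :: v) - shW0 u (Letter.d :: Letter.d :: v) := by
  simp [shW0]
@[elab_as_elim] lemma V_ind {P : V → Prop} (hw : ∀ w : List Letter, P (wrd w))
    (h0 : P 0) (hadd : ∀ x y, P x → P y → P (x + y))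
    (hsmul : ∀ (c : ℚ) (x : V), P x → P (c • x)) (x : V) : P x := by
  induction x using MonoidAlgebra.induction_linear with
  | zero => exact h0
  | add f g hf hg => exact hadd _ _ hf hg
  | single a b =>
    have h : (MonoidAlgebra.single a b : V) = b • wrd (FreeMonoid.toList a) := by
      simp [wrd, MonoidAlgebra.smul_single']
    rw [h]; exact hsmul b _ (hw _)

lemma shL0_one_left (b : V) : shL0 1 b = b := by
  have : shL0 1 = (LinearMap.id : V →ₗ[ℚ] V) := by
    apply V_ext; intro w
    have h1 : (1 : V) = wrd [] := rfl
    rw [LinearMap.id_apply, h1, shL0_wrd, shW0_nil_left]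
  rw [this]; rfl

lemma shL0_one_right (a : V) : shL0 a 1 = a := by
  have : shL0.flip 1 = (LinearMap.id : V →ₗ[ℚ] V) := by
    apply V_ext; intro w
    have h1 : (1 : V) = wrd [] := rfl
    rw [LinearMap.id_apply, LinearMap.flip_apply, h1, shL0_wrd, shW0_nil_right]
  exact DFunLike.congr_fun this a

lemma shL0_y_left (a b : V) :
    shL0 (wrd [Letter.y] * a) b = wrd [Letter.y] * shL0 a b := by
  have : shL0.comp (LinearMap.mulLeft ℚ (wrd [Letter.y]))
      = shL0.compr₂ (LinearMap.mulLeft ℚ (wrd [Letter.y])) := by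
    apply V_ext; intro u; apply V_ext; intro v
    simp only [LinearMap.comp_apply, LinearMap.compr₂_apply, LinearMap.mulLeft_apply]
    rw [show wrd [Letter.y] * wrd u = wrd (Letter.y :: u) from wrd_mul _ _,
      shL0_wrd, shL0_wrd, shW0_y_left]
  exact DFunLike.congr_fun (DFunLike.congr_fun this a) b

lemma shL0_y_right (a b : V) :
    shL0 a (wrd [Letter.y] * b) = wrd [Letter.y] * shL0 a b := by
  have : shL0.compl₂ (LinearMap.mulLeft ℚ (wrd [Letter.y]))
      = shL0.compr₂ (LinearMap.mulLeft ℚ (wrd [Letter.y])) := by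
    apply V_ext; intro u; apply V_ext; intro v
    simp only [LinearMap.compl₂_apply, LinearMap.compr₂_apply, LinearMap.mulLeft_apply]
    rw [show wrd [Letter.y] * wrd v = wrd (Letter.y :: v) from wrd_mul _ _,
      shL0_wrd, shL0_wrd, shW0_y_right]
  exact DFunLike.congr_fun (DFunLike.congr_fun this a) b

lemma shL0_wy_left (b : V) : shL0 (wrd [Letter.y]) b = wrd [Letter.y] * b := by
  have := shL0_y_left 1 b
  rwa [mul_one, shL0_one_left] at this

-- the generator set
def genSet : Set V :=
  {x : V | ∃ (k : ℕ) (u v : List Letter),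
      x = wrd (List.replicate k Letter.d) *
        (wrd [Letter.d] * shL0 (wrd u) (wrd v)
          - shL0 (wrd (Letter.d :: u)) (wrd v)
          - shL0 (wrd u) (wrd (Letter.d :: v)))}

lemma Lminus_def : Lminus = sInf {p : Submodule ℚ V | genSet ⊆ ↑p ∧
    ∀ x ∈ p, ∀ b : V, shL0 x b ∈ p ∧ shL0 b x ∈ p} := rfl

lemma gen0_mem {x : V} (hx : x ∈ genSet) : x ∈ Lminus := by
  rw [Lminus_def, Submodule.mem_sInf]
  exact fun p hp => hp.1 hx

lemma shL0_mem_left {a : V} (ha : a ∈ Lminus) (b : V) : shL0 a b ∈ Lminus := by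
  rw [Lminus_def, Submodule.mem_sInf]
  intro p hp
  rw [Lminus_def, Submodule.mem_sInf] at ha
  exact (hp.2 a (ha p hp) b).1

lemma shL0_mem_right {a : V} (ha : a ∈ Lminus) (b : V) : shL0 b a ∈ Lminus := by
  rw [Lminus_def, Submodule.mem_sInf]
  intro p hp
  rw [Lminus_def, Submodule.mem_sInf] at ha
  exact (hp.2 a (ha p hp) b).2

lemma gen_mem (a b : V) :
    wrd [Letter.d] * shL0 a b - shL0 (wrd [Letter.d] * a) b
      - shL0 a (wrd [Letter.d] * b) ∈ Lminus := by
  induction a using V_ind with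
  | hw u =>
    induction b using V_ind with
    | hw v =>
      apply gen0_mem
      refine ⟨0, u, v, ?_⟩
      rw [show wrd (List.replicate 0 Letter.d) = 1 from rfl, one_mul,
        wrd_mul, wrd_mul]
      rfl
    | h0 => simp
    | hadd x y hx hy =>
      have : wrd [Letter.d] * shL0 (wrd u) (x + y)
          - shL0 (wrd [Letter.d] * wrd u) (x + y)
          - shL0 (wrd u) (wrd [Letter.d] * (x + y))
        = (wrd [Letter.d] * shL0 (wrd u) x - shL0 (wrd [Letter.d] * wrd u) x
            - shL0 (wrd u) (wrd [Letter.d] * x))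
          + (wrd [Letter.d] * shL0 (wrd u) y - shL0 (wrd [Letter.d] * wrd u) y
            - shL0 (wrd u) (wrd [Letter.d] * y)) := by
        simp only [map_add, mul_add]; abel
      rw [this]; exact add_mem hx hy
    | hsmul c x hx =>
      have : wrd [Letter.d] * shL0 (wrd u) (c • x)
          - shL0 (wrd [Letter.d] * wrd u) (c • x)
          - shL0 (wrd u) (wrd [Letter.d] * (c • x))
        = c • (wrd [Letter.d] * shL0 (wrd u) x - shL0 (wrd [Letter.d] * wrd u) x
            - shL0 (wrd u) (wrd [Letter.d] * x)) := by
        simp only [map_smul, mul_smul_comm, smul_sub]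
      rw [this]; exact Submodule.smul_mem _ _ hx
  | h0 => simp
  | hadd x y hx hy =>
    have : wrd [Letter.d] * shL0 (x + y) b - shL0 (wrd [Letter.d] * (x + y)) b
        - shL0 (x + y) (wrd [Letter.d] * b)
      = (wrd [Letter.d] * shL0 x b - shL0 (wrd [Letter.d] * x) b
          - shL0 x (wrd [Letter.d] * b))
        + (wrd [Letter.d] * shL0 y b - shL0 (wrd [Letter.d] * y) b
          - shL0 y (wrd [Letter.d] * b)) := by
      simp only [map_add, mul_add, LinearMap.add_apply]; abel
    rw [this]; exact add_mem hx hy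
  | hsmul c x hx =>
    have : wrd [Letter.d] * shL0 (c • x) b - shL0 (wrd [Letter.d] * (c • x)) b
        - shL0 (c • x) (wrd [Letter.d] * b)
      = c • (wrd [Letter.d] * shL0 x b - shL0 (wrd [Letter.d] * x) b
          - shL0 x (wrd [Letter.d] * b)) := by
      simp only [map_smul, mul_smul_comm, smul_sub, LinearMap.smul_apply]
    rw [this]; exact Submodule.smul_mem _ _ hx
lemma Lminus_mul_y {x : V} (hx : x ∈ Lminus) : wrd [Letter.y] * x ∈ Lminus := by
  rw [← shL0_wy_left]
  exact shL0_mem_right hx _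

lemma Lminus_mul_d {x : V} (hx : x ∈ Lminus) : wrd [Letter.d] * x ∈ Lminus := by
  set p' : Submodule ℚ V :=
    Lminus ⊓ Lminus.comap (LinearMap.mulLeft ℚ (wrd [Letter.d])) with hp'
  have hmem : ∀ z, z ∈ p' ↔ z ∈ Lminus ∧ wrd [Letter.d] * z ∈ Lminus := by
    intro z
    simp [hp', Submodule.mem_inf, Submodule.mem_comap, LinearMap.mulLeft_apply]
  have hS : genSet ⊆ ↑p' ∧ ∀ z ∈ p', ∀ b : V, shL0 z b ∈ p' ∧ shL0 b z ∈ p' := by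
    constructor
    · rintro z ⟨k, u, v, rfl⟩
      rw [SetLike.mem_coe, hmem]
      refine ⟨gen0_mem ⟨k, u, v, rfl⟩, ?_⟩
      rw [← mul_assoc, wrd_mul]
      exact gen0_mem ⟨k + 1, u, v, by rw [List.replicate_succ]; rfl⟩
    · intro z hz b
      rw [hmem] at hz
      obtain ⟨hz1, hz2⟩ := hz
      constructor
      · rw [hmem]
        refine ⟨shL0_mem_left hz1 b, ?_⟩
        have h : wrd [Letter.d] * shL0 z b
            = (wrd [Letter.d] * shL0 z b - shL0 (wrd [Letter.d] * z) b
                - shL0 z (wrd [Letter.d] * b))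
              + shL0 (wrd [Letter.d] * z) b + shL0 z (wrd [Letter.d] * b) := by abel
        rw [h]
        exact add_mem (add_mem (gen_mem z b) (shL0_mem_left hz2 b))
          (shL0_mem_left hz1 _)
      · rw [hmem]
        refine ⟨shL0_mem_right hz1 b, ?_⟩
        have h : wrd [Letter.d] * shL0 b z
            = (wrd [Letter.d] * shL0 b z - shL0 (wrd [Letter.d] * b) z
                - shL0 b (wrd [Letter.d] * z))
              + shL0 (wrd [Letter.d] * b) z + shL0 b (wrd [Letter.d] * z) := by abel
        rw [h]
        exact add_mem (add_mem (gen_mem b z) (shL0_mem_right hz1 _))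
          (shL0_mem_right hz2 b)
  have hle : Lminus ≤ p' := by
    rw [Lminus_def]
    exact sInf_le hS
  exact ((hmem x).1 (hle hx)).2

lemma Lminus_mul_letter (l : Letter) {x : V} (hx : x ∈ Lminus) :
    wrd [l] * x ∈ Lminus := by
  cases l
  · exact Lminus_mul_d hx
  · exact Lminus_mul_y hx
set_option synthInstance.maxHeartbeats 400000
set_option maxHeartbeats 1000000

noncomputable def MM : Submodule ℚ (V ⊗[ℚ] V) :=
  LinearMap.range (TensorProduct.map Lminus.subtype (LinearMap.id : V →ₗ[ℚ] V)) ⊔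
    LinearMap.range (TensorProduct.map (LinearMap.id : V →ₗ[ℚ] V) Lminus.subtype)

lemma mem_MM_left {x : V} (hx : x ∈ Lminus) (b : V) : x ⊗ₜ[ℚ] b ∈ MM := by
  refine le_sup_left (α := Submodule ℚ (V ⊗[ℚ] V)) ?_
  exact LinearMap.mem_range.2 ⟨(⟨x, hx⟩ : Lminus) ⊗ₜ b, by simp⟩

lemma mem_MM_right (a : V) {x : V} (hx : x ∈ Lminus) : a ⊗ₜ[ℚ] x ∈ MM := by
  refine le_sup_right (α := Submodule ℚ (V ⊗[ℚ] V)) ?_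
  exact LinearMap.mem_range.2 ⟨a ⊗ₜ (⟨x, hx⟩ : Lminus), by simp⟩

-- shT0 basic lemmas
lemma shT0_tmul (a b c e : V) :
    shT0 (a ⊗ₜ b) (c ⊗ₜ e) = shL0 a c ⊗ₜ[ℚ] shL0 b e := by
  simp [shT0, TensorProduct.tensorTensorTensorComm_tmul]

lemma shT0_add_left (X X' Z : V ⊗[ℚ] V) :
    shT0 (X + X') Z = shT0 X Z + shT0 X' Z := by
  unfold shT0
  rw [TensorProduct.add_tmul, LinearEquiv.map_add, LinearMap.map_add]

lemma shT0_add_right (X Z Z' : V ⊗[ℚ] V) :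
    shT0 X (Z + Z') = shT0 X Z + shT0 X Z' := by
  unfold shT0
  rw [TensorProduct.tmul_add, LinearEquiv.map_add, LinearMap.map_add]

lemma shT0_zero_left (Z : V ⊗[ℚ] V) : shT0 0 Z = 0 := by
  unfold shT0
  rw [TensorProduct.zero_tmul, LinearEquiv.map_zero, LinearMap.map_zero]

lemma shT0_zero_right (X : V ⊗[ℚ] V) : shT0 X 0 = 0 := by
  unfold shT0
  rw [TensorProduct.tmul_zero, LinearEquiv.map_zero, LinearMap.map_zero]

lemma shT0_sub_left (X X' Z : V ⊗[ℚ] V) :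
    shT0 (X - X') Z = shT0 X Z - shT0 X' Z := by
  unfold shT0
  rw [TensorProduct.sub_tmul, map_sub, map_sub]

lemma shT0_sub_right (X Z Z' : V ⊗[ℚ] V) :
    shT0 X (Z - Z') = shT0 X Z - shT0 X Z' := by
  unfold shT0
  rw [TensorProduct.tmul_sub, map_sub, map_sub]

-- general closure principle for MM
lemma MM_closure (Q : V ⊗[ℚ] V → V ⊗[ℚ] V)
    (hQadd : ∀ X Y, Q (X + Y) = Q X + Q Y) (hQ0 : Q 0 = 0)
    (hL : ∀ x ∈ Lminus, ∀ b : V, Q (x ⊗ₜ b) ∈ MM)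
    (hR : ∀ a : V, ∀ x ∈ Lminus, Q (a ⊗ₜ x) ∈ MM) :
    ∀ X ∈ MM, Q X ∈ MM := by
  intro X hX
  obtain ⟨X1, hX1, X2, hX2, rfl⟩ := Submodule.mem_sup.1 hX
  clear hX
  rw [hQadd]
  refine add_mem ?_ ?_
  · obtain ⟨s, rfl⟩ := hX1
    clear hX2
    induction s using TensorProduct.induction_on with
    | zero => rw [map_zero, hQ0]; exact zero_mem _
    | tmul x b =>
      rw [TensorProduct.map_tmul]
      exact hL x.1 x.2 b
    | add s t hs ht =>
      rw [map_add, hQadd]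
      exact add_mem hs ht
  · obtain ⟨s, rfl⟩ := hX2
    clear hX1
    induction s using TensorProduct.induction_on with
    | zero => rw [map_zero, hQ0]; exact zero_mem _
    | tmul a x =>
      rw [TensorProduct.map_tmul]
      exact hR a x.1 x.2
    | add s t hs ht =>
      rw [map_add, hQadd]
      exact add_mem hs ht

lemma MM_shT0_left {X : V ⊗[ℚ] V} (hX : X ∈ MM) (Z : V ⊗[ℚ] V) :
    shT0 X Z ∈ MM := by
  refine MM_closure (fun X => shT0 X Z) (fun X Y => shT0_add_left X Y Z)
    (shT0_zero_left Z) ?_ ?_ X hX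
  · intro x hx b
    induction Z using TensorProduct.induction_on with
    | zero => rw [shT0_zero_right]; exact zero_mem _
    | tmul c e => rw [shT0_tmul]; exact mem_MM_left (shL0_mem_left hx c) _
    | add Z1 Z2 h1 h2 => rw [shT0_add_right]; exact add_mem h1 h2
  · intro a x hx
    induction Z using TensorProduct.induction_on with
    | zero => rw [shT0_zero_right]; exact zero_mem _
    | tmul c e => rw [shT0_tmul]; exact mem_MM_right _ (shL0_mem_left hx e)
    | add Z1 Z2 h1 h2 => rw [shT0_add_right]; exact add_mem h1 h2

lemma MM_shT0_right (X : V ⊗[ℚ] V) {Z : V ⊗[ℚ] V} (hZ : Z ∈ MM) :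
    shT0 X Z ∈ MM := by
  refine MM_closure (fun Z => shT0 X Z) (fun Z1 Z2 => shT0_add_right X Z1 Z2)
    (shT0_zero_right X) ?_ ?_ Z hZ
  · intro x hx b
    induction X using TensorProduct.induction_on with
    | zero => rw [shT0_zero_left]; exact zero_mem _
    | tmul a c => rw [shT0_tmul]; exact mem_MM_left (shL0_mem_right hx a) _
    | add X1 X2 h1 h2 => rw [shT0_add_left]; exact add_mem h1 h2
  · intro a x hx
    induction X using TensorProduct.induction_on with
    | zero => rw [shT0_zero_left]; exact zero_mem _
    | tmul a' c => rw [shT0_tmul]; exact mem_MM_right _ (shL0_mem_right hx c)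
    | add X1 X2 h1 h2 => rw [shT0_add_left]; exact add_mem h1 h2

lemma MM_mul_dval (l : Letter) {X : V ⊗[ℚ] V} (hX : X ∈ MM) :
    dval0 l * X ∈ MM := by
  refine MM_closure (fun X => dval0 l * X) (fun X Y => mul_add _ X Y)
    (mul_zero _) ?_ ?_ X hX
  · intro x hx b
    have h : dval0 l * (x ⊗ₜ[ℚ] b)
        = x ⊗ₜ[ℚ] (wrd [l] * b) + (wrd [l] * x) ⊗ₜ[ℚ] b := by
      cases l <;>
        simp [dval0, add_mul, Algebra.TensorProduct.tmul_mul_tmul]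
    rw [h]
    exact add_mem (mem_MM_left hx _) (mem_MM_left (Lminus_mul_letter l hx) _)
  · intro a x hx
    have h : dval0 l * (a ⊗ₜ[ℚ] x)
        = a ⊗ₜ[ℚ] (wrd [l] * x) + (wrd [l] * a) ⊗ₜ[ℚ] x := by
      cases l <;>
        simp [dval0, add_mul, Algebra.TensorProduct.tmul_mul_tmul]
    rw [h]
    exact add_mem (mem_MM_right _ (Lminus_mul_letter l hx)) (mem_MM_right _ hx)
lemma shT0_one_left (Z : V ⊗[ℚ] V) : shT0 1 Z = Z := by
  induction Z using TensorProduct.induction_on with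
  | zero => exact shT0_zero_right 1
  | tmul c e =>
    rw [Algebra.TensorProduct.one_def, shT0_tmul, shL0_one_left, shL0_one_left]
  | add Z1 Z2 h1 h2 => rw [shT0_add_right, h1, h2]

lemma shT0_one_right (X : V ⊗[ℚ] V) : shT0 X 1 = X := by
  induction X using TensorProduct.induction_on with
  | zero => exact shT0_zero_left 1
  | tmul a b =>
    rw [Algebra.TensorProduct.one_def, shT0_tmul, shL0_one_right, shL0_one_right]
  | add X1 X2 h1 h2 => rw [shT0_add_left, h1, h2]

lemma shT0_y_left (X Z : V ⊗[ℚ] V) :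
    shT0 (dval0 Letter.y * X) Z = dval0 Letter.y * shT0 X Z := by
  induction X using TensorProduct.induction_on with
  | zero => rw [mul_zero, shT0_zero_left, mul_zero]
  | tmul a b =>
    induction Z using TensorProduct.induction_on with
    | zero => simp only [mul_zero, shT0_zero_right]
    | tmul c e =>
      have h : dval0 Letter.y * (a ⊗ₜ[ℚ] b)
          = a ⊗ₜ[ℚ] (wrd [Letter.y] * b) + (wrd [Letter.y] * a) ⊗ₜ[ℚ] b := by
        simp [dval0, add_mul, Algebra.TensorProduct.tmul_mul_tmul]
      rw [h, shT0_add_left, shT0_tmul, shT0_tmul, shT0_tmul,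
        shL0_y_left, shL0_y_left]
      simp [dval0, add_mul, Algebra.TensorProduct.tmul_mul_tmul]
    | add Z1 Z2 h1 h2 =>
      rw [shT0_add_right, shT0_add_right, h1, h2, mul_add]
  | add X1 X2 h1 h2 =>
    rw [mul_add, shT0_add_left, shT0_add_left, h1, h2, mul_add]

lemma shT0_y_right (X Z : V ⊗[ℚ] V) :
    shT0 X (dval0 Letter.y * Z) = dval0 Letter.y * shT0 X Z := by
  induction X using TensorProduct.induction_on with
  | zero => rw [shT0_zero_left, shT0_zero_left, mul_zero]
  | tmul a b =>
    induction Z using TensorProduct.induction_on with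
    | zero => simp only [mul_zero, shT0_zero_right]
    | tmul c e =>
      have h : dval0 Letter.y * (c ⊗ₜ[ℚ] e)
          = c ⊗ₜ[ℚ] (wrd [Letter.y] * e) + (wrd [Letter.y] * c) ⊗ₜ[ℚ] e := by
        simp [dval0, add_mul, Algebra.TensorProduct.tmul_mul_tmul]
      rw [h, shT0_add_right, shT0_tmul, shT0_tmul, shT0_tmul,
        shL0_y_right, shL0_y_right]
      simp [dval0, add_mul, Algebra.TensorProduct.tmul_mul_tmul]
    | add Z1 Z2 h1 h2 =>
      rw [mul_add, shT0_add_right, shT0_add_right, h1, h2, mul_add]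
  | add X1 X2 h1 h2 =>
    rw [shT0_add_left, shT0_add_left, h1, h2, mul_add]

lemma shT0_d_deriv (X Z : V ⊗[ℚ] V) :
    dval0 Letter.d * shT0 X Z - shT0 (dval0 Letter.d * X) Z
      - shT0 X (dval0 Letter.d * Z) ∈ MM := by
  induction X using TensorProduct.induction_on with
  | zero =>
    simp only [mul_zero, shT0_zero_left, sub_zero]
    exact zero_mem _
  | tmul a b =>
    induction Z using TensorProduct.induction_on with
    | zero =>
      simp only [mul_zero, shT0_zero_right, sub_zero]
      exact zero_mem _
    | tmul c e =>
      have hX : dval0 Letter.d * (a ⊗ₜ[ℚ] b)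
          = a ⊗ₜ[ℚ] (wrd [Letter.d] * b) + (wrd [Letter.d] * a) ⊗ₜ[ℚ] b := by
        simp [dval0, add_mul, Algebra.TensorProduct.tmul_mul_tmul]
      have hZ : dval0 Letter.d * (c ⊗ₜ[ℚ] e)
          = c ⊗ₜ[ℚ] (wrd [Letter.d] * e) + (wrd [Letter.d] * c) ⊗ₜ[ℚ] e := by
        simp [dval0, add_mul, Algebra.TensorProduct.tmul_mul_tmul]
      have key : dval0 Letter.d * shT0 (a ⊗ₜ[ℚ] b) (c ⊗ₜ[ℚ] e)
          - shT0 (dval0 Letter.d * (a ⊗ₜ[ℚ] b)) (c ⊗ₜ[ℚ] e)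
          - shT0 (a ⊗ₜ[ℚ] b) (dval0 Letter.d * (c ⊗ₜ[ℚ] e))
          = (shL0 a c) ⊗ₜ[ℚ]
              (wrd [Letter.d] * shL0 b e - shL0 (wrd [Letter.d] * b) e
                - shL0 b (wrd [Letter.d] * e))
            + (wrd [Letter.d] * shL0 a c - shL0 (wrd [Letter.d] * a) c
                - shL0 a (wrd [Letter.d] * c)) ⊗ₜ[ℚ] (shL0 b e) := by
        rw [hX, hZ, shT0_add_left, shT0_add_right]
        simp only [shT0_tmul, dval0, add_mul,
          Algebra.TensorProduct.tmul_mul_tmul, one_mul, mul_one,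
          TensorProduct.tmul_sub, TensorProduct.sub_tmul]
        abel
      rw [key]
      exact add_mem (mem_MM_right _ (gen_mem b e)) (mem_MM_left (gen_mem a c) _)
    | add Z1 Z2 h1 h2 =>
      have key : dval0 Letter.d * shT0 (a ⊗ₜ[ℚ] b) (Z1 + Z2)
          - shT0 (dval0 Letter.d * (a ⊗ₜ[ℚ] b)) (Z1 + Z2)
          - shT0 (a ⊗ₜ[ℚ] b) (dval0 Letter.d * (Z1 + Z2))
          = (dval0 Letter.d * shT0 (a ⊗ₜ[ℚ] b) Z1
              - shT0 (dval0 Letter.d * (a ⊗ₜ[ℚ] b)) Z1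
              - shT0 (a ⊗ₜ[ℚ] b) (dval0 Letter.d * Z1))
            + (dval0 Letter.d * shT0 (a ⊗ₜ[ℚ] b) Z2
              - shT0 (dval0 Letter.d * (a ⊗ₜ[ℚ] b)) Z2
              - shT0 (a ⊗ₜ[ℚ] b) (dval0 Letter.d * Z2)) := by
        rw [mul_add, shT0_add_right, shT0_add_right, mul_add, shT0_add_right]
        abel
      rw [key]; exact add_mem h1 h2
  | add X1 X2 h1 h2 =>
    have key : dval0 Letter.d * shT0 (X1 + X2) Z
        - shT0 (dval0 Letter.d * (X1 + X2)) Z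
        - shT0 (X1 + X2) (dval0 Letter.d * Z)
        = (dval0 Letter.d * shT0 X1 Z - shT0 (dval0 Letter.d * X1) Z
            - shT0 X1 (dval0 Letter.d * Z))
          + (dval0 Letter.d * shT0 X2 Z - shT0 (dval0 Letter.d * X2) Z
            - shT0 X2 (dval0 Letter.d * Z)) := by
      rw [shT0_add_left, mul_add, mul_add, shT0_add_left, shT0_add_left]
      abel
    rw [key]; exact add_mem h1 h2
lemma Delta0_single (l : Letter) : Delta0 (wrd [l]) = dval0 l := by
  simp [Delta0, wrd, MonoidAlgebra.lift_single]

lemma Delta0_cons (l : Letter) (w : List Letter) :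
    Delta0 (wrd (l :: w)) = dval0 l * Delta0 (wrd w) := by
  rw [show (l :: w) = [l] ++ w from rfl, ← wrd_mul, map_mul, Delta0_single]

lemma main_lemma : ∀ (n : ℕ) (u v : List Letter),
    2 * (u.length + v.length) + u.length ≤ n →
    Delta0 (shL0 (wrd u) (wrd v)) - shT0 (Delta0 (wrd u)) (Delta0 (wrd v)) ∈ MM := by
  intro n
  induction n using Nat.strong_induction_on with
  | _ n ih =>
  intro u v hn
  rcases u with _ | ⟨l, u'⟩
  · rw [show wrd ([] : List Letter) = 1 from rfl, shL0_one_left, map_one,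
      shT0_one_left, sub_self]
    exact zero_mem _
  · cases l with
    | y =>
      rw [shL0_wrd, shW0_y_left, ← shL0_wrd u' v, map_mul, Delta0_single,
        Delta0_cons, shT0_y_left, ← mul_sub]
      refine MM_mul_dval _ (ih (2 * (u'.length + v.length) + u'.length) ?_ u' v le_rfl)
      simp only [List.length_cons] at hn
      omega
    | d =>
      rcases v with _ | ⟨m, v'⟩
      · rw [shL0_wrd, shW0_nil_right, show wrd ([] : List Letter) = 1 from rfl,
          map_one, shT0_one_right, sub_self]
        exact zero_mem _
      · cases m with
        | y =>
          rw [shL0_wrd, shW0_y_right, ← shL0_wrd (Letter.d :: u') v', map_mul,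
            Delta0_single, Delta0_cons Letter.y v', shT0_y_right, ← mul_sub]
          refine MM_mul_dval _
            (ih (2 * ((Letter.d :: u').length + v'.length) + (Letter.d :: u').length)
              ?_ (Letter.d :: u') v' le_rfl)
          simp only [List.length_cons] at hn ⊢
          omega
        | d =>
          have h1 := ih (2 * (u'.length + (Letter.d :: v').length) + u'.length)
            (by simp only [List.length_cons] at hn ⊢; omega) u' (Letter.d :: v') le_rfl
          have h2 := ih
            (2 * (u'.length + (Letter.d :: Letter.d :: v').length) + u'.length)
            (by simp only [List.length_cons] at hn ⊢; omega) u'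
            (Letter.d :: Letter.d :: v') le_rfl
          simp only [Delta0_cons] at h1 h2 ⊢
          rw [shL0_wrd, shW0_d_d, ← shL0_wrd u' (Letter.d :: v'),
            ← shL0_wrd u' (Letter.d :: Letter.d :: v'), map_sub, map_mul,
            Delta0_single]
          have h3 := shT0_d_deriv (Delta0 (wrd u'))
            (dval0 Letter.d * Delta0 (wrd v'))
          set D := dval0 Letter.d
          set A := Delta0 (wrd u')
          set Cv := Delta0 (wrd v')
          set P := Delta0 (shL0 (wrd u') (wrd (Letter.d :: v')))
          set Q := Delta0 (shL0 (wrd u') (wrd (Letter.d :: Letter.d :: v')))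
          have key : D * P - Q - shT0 (D * A) (D * Cv)
              = D * (P - shT0 A (D * Cv)) - (Q - shT0 A (D * (D * Cv)))
                + (D * shT0 A (D * Cv) - shT0 (D * A) (D * Cv)
                  - shT0 A (D * (D * Cv))) := by
            rw [mul_sub]; abel
          rw [key]
          exact add_mem (sub_mem (MM_mul_dval _ h1) h2) h3

/-- For all words `u, v`:
`Δ̄₀(u ⧢₀ v) − Δ̄₀(u) ⧢₀ Δ̄₀(v) ∈ L₋ ⊗ ℚ⟨L⟩ + ℚ⟨L⟩ ⊗ L₋`. -/
theorem stmt_14 (u v : List Letter) :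
    Delta0 (shL0 (wrd u) (wrd v)) - shT0 (Delta0 (wrd u)) (Delta0 (wrd v)) ∈
      LinearMap.range (TensorProduct.map Lminus.subtype (LinearMap.id : V →ₗ[ℚ] V)) ⊔
        LinearMap.range (TensorProduct.map (LinearMap.id : V →ₗ[ℚ] V) Lminus.subtype) :=
  main_lemma (2 * (u.length + v.length) + u.length) u v le_rfl
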